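/- Let f : {0,1}^n → {0,1}^{nα} be chosen uniformly at random among all functions, with α, β, δ > 0 and α + β + δ < 1. Fix a subset I ⊆ {1,…,n} with |I| = nβ and a string y ∈ {0,1}^{|I|}. Let X be uniform on {0,1}^n. Then with probability at least 1 − 2^{−2^{nα}(2^{n(1−β−α−δ)} − n(1−β+1/n))} over the choice of f, the conditional entropy satisfies H(f(X) | X|_I = y) ≥ nα − 2^{−nδ}. -/

import Mathlib

open Finset

-- product over S grouped by fibers of f
lemma aux_prodS {D V : Type*} [Fintype V] [DecidableEq V] (S : Finset D) (f : D → V) (p : V → ℝ) :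
    ∏ x ∈ S, p (f x) = ∏ v, p v ^ (S.filter (fun x => f x = v)).card := by
  rw [← Finset.prod_fiberwise S f (fun x => p (f x))]
  refine Finset.prod_congr rfl fun v _ => ?_
  rw [Finset.prod_congr rfl (fun x hx => by rw [(Finset.mem_filter.1 hx).2] :
      ∀ x ∈ S.filter (fun x => f x = v), p (f x) = p v), Finset.prod_const]

lemma aux_sumFuns {D V : Type*} [Fintype D] [Fintype V] [DecidableEq D] [DecidableEq V] (S : Finset D) (p : V → ℝ)
    (hp1 : ∑ v, p v = 1) :
    ∑ g : D → V, ∏ x ∈ S, p (g x)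
      = (Fintype.card V : ℝ) ^ (Fintype.card D - S.card) := by
  have h1 : ∀ g : D → V, ∏ x ∈ S, p (g x) = ∏ x, (if x ∈ S then p (g x) else 1) := by
    intro g
    rw [Finset.prod_ite_mem Finset.univ S (fun x => p (g x)), Finset.univ_inter]
  simp only [h1]
  rw [← Fintype.piFinset_univ, ← Finset.prod_univ_sum (fun _ => Finset.univ)
      (fun x v => if x ∈ S then p v else 1)]
  have h2 : ∀ x : D, (∑ v : V, if x ∈ S then p v else 1)
      = if x ∈ S then 1 else (Fintype.card V : ℝ) := by
    intro x; split_ifs with h <;> simp [hp1, Finset.card_univ]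
  rw [Finset.prod_congr rfl fun x _ => h2 x]
  rw [← Finset.prod_mul_prod_compl S]
  rw [Finset.prod_congr rfl (fun x hx => if_pos hx), Finset.prod_const_one, one_mul]
  rw [Finset.prod_congr rfl (fun x hx => if_neg (Finset.mem_compl.1 hx)), Finset.prod_const,
    Finset.card_compl]

lemma aux_fiberBound {D V : Type*} [Fintype D] [Fintype V] [DecidableEq V] [DecidableEq D] (S : Finset D) (k : V → ℕ)
    (hk : ∑ v, k v = S.card) :
    ((Finset.univ.filter (fun g : D → V =>
        ∀ v, (S.filter (fun x => g x = v)).card = k v)).card : ℝ)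
      * ∏ v, ((k v : ℝ) / (S.card : ℝ)) ^ (k v)
    ≤ (Fintype.card V : ℝ) ^ (Fintype.card D - S.card) := by
  classical
  rcases Nat.eq_zero_or_pos S.card with h0 | hN
  · have hS : S = ∅ := Finset.card_eq_zero.1 h0
    have hk0 : ∀ v, k v = 0 := by
      intro v
      rw [h0] at hk
      exact (Finset.sum_eq_zero_iff.1 hk) v (Finset.mem_univ v)
    simp only [hS, hk0, Finset.filter_empty, Finset.card_empty, h0]
    simp only [pow_zero, Finset.prod_const_one, mul_one, Nat.sub_zero]
    rw [Finset.filter_true_of_mem (fun _ _ => fun _ => trivial), Finset.card_univ,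
      Fintype.card_fun]
    push_cast
    exact le_refl _
  set p : V → ℝ := fun v => (k v : ℝ) / (S.card : ℝ) with hp
  have hp0 : ∀ v, 0 ≤ p v := fun v => by positivity
  have hp1 : ∑ v, p v = 1 := by
    rw [hp, ← Finset.sum_div]
    rw [show (∑ v, ((k v : ℕ) : ℝ)) = ((∑ v, k v : ℕ) : ℝ) by push_cast; ring, hk]
    exact div_self (by positivity)
  rw [← aux_sumFuns S p hp1]
  have key : ∀ g ∈ Finset.univ.filter (fun g : D → V =>
      ∀ v, (S.filter (fun x => g x = v)).card = k v),
      ∏ v, p v ^ (k v) = ∏ x ∈ S, p (g x) := by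
    intro g hg
    rw [aux_prodS S g p]
    exact Finset.prod_congr rfl fun v _ => by rw [(Finset.mem_filter.1 hg).2 v]
  calc ((Finset.univ.filter (fun g : D → V =>
        ∀ v, (S.filter (fun x => g x = v)).card = k v)).card : ℝ) * ∏ v, p v ^ (k v)
      = ∑ g ∈ Finset.univ.filter (fun g : D → V =>
          ∀ v, (S.filter (fun x => g x = v)).card = k v), ∏ x ∈ S, p (g x) := by
        rw [← Finset.sum_congr rfl key, Finset.sum_const, nsmul_eq_mul]
    _ ≤ ∑ g : D → V, ∏ x ∈ S, p (g x) := by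
        apply Finset.sum_le_sum_of_subset_of_nonneg (Finset.filter_subset _ _)
        intro g _ _
        exact Finset.prod_nonneg fun x _ => hp0 _


/-- Shannon entropy in bits of a distribution on a finite set. -/
noncomputable def shEnt {S : Type*} [Fintype S] (p : S → ℝ) : ℝ :=
  -∑ x, p x * Real.logb 2 (p x)

/-- The conditional entropy `H(f(X) | X|_I = y)` where `X` is uniform on `{0,1}^n`:
the entropy of the image of `f` on the inputs consistent with `y` on `I`,
each such input being equally likely. -/
noncomputable def condImgEnt {n a : ℕ} (f : (Fin n → Bool) → (Fin a → Bool))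
    (I : Finset (Fin n)) (y : {i // i ∈ I} → Bool) : ℝ :=
  shEnt (fun v : Fin a → Bool =>
    ((Finset.univ.filter (fun x : Fin n → Bool =>
        (∀ i : {i // i ∈ I}, x i.1 = y i) ∧ f x = v)).card : ℝ) /
    ((Finset.univ.filter (fun x : Fin n → Bool =>
        ∀ i : {i // i ∈ I}, x i.1 = y i)).card : ℝ))

lemma aux_prodPow {V : Type*} [Fintype V] (k : V → ℕ) (N : ℕ) (hN : 0 < N) :
    ∏ v, ((k v : ℝ) / (N : ℝ)) ^ (k v)
      = (2 : ℝ) ^ (∑ v, (k v : ℝ) * Real.logb 2 ((k v : ℝ) / (N : ℝ))) := by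
  have h2 : (0:ℝ) < 2 := two_pos
  have hterm : ∀ v : V, ((k v : ℝ) / (N : ℝ)) ^ (k v)
      = (2 : ℝ) ^ ((k v : ℝ) * Real.logb 2 ((k v : ℝ) / (N : ℝ))) := by
    intro v
    rcases Nat.eq_zero_or_pos (k v) with h | h
    · simp [h]
    · have hx : (0:ℝ) < (k v : ℝ) / (N : ℝ) := by positivity
      rw [mul_comm, Real.rpow_mul (le_of_lt h2), Real.rpow_logb h2 (by norm_num) hx,
        Real.rpow_natCast]
  rw [Finset.prod_congr rfl fun v _ => hterm v]
  have : ∀ s : Finset V, ∏ v ∈ s, (2:ℝ) ^ ((k v : ℝ) * Real.logb 2 ((k v : ℝ) / (N : ℝ)))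
      = (2:ℝ) ^ (∑ v ∈ s, (k v : ℝ) * Real.logb 2 ((k v : ℝ) / (N : ℝ))) := by
    intro s
    induction s using Finset.cons_induction with
    | empty => simp
    | cons a s ha ih => rw [Finset.prod_cons, Finset.sum_cons, ih, ← Real.rpow_add two_pos]
  exact this Finset.univ

lemma aux_badIneq {V : Type*} [Fintype V] (k : V → ℕ) (N : ℕ) (hN : 0 < N)
    (A ε : ℝ) (h : shEnt (fun v => (k v : ℝ) / (N : ℝ)) < A - ε) :
    (2 : ℝ) ^ (-((N : ℝ) * A)) ≤ (2 : ℝ) ^ (-((N : ℝ) * ε)) * ∏ v, ((k v : ℝ) / (N : ℝ)) ^ (k v) := by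
  rw [aux_prodPow k N hN, ← Real.rpow_add two_pos]
  apply Real.rpow_le_rpow_left_iff (x := 2) (by norm_num) |>.mpr
  set L := ∑ v, (k v : ℝ) * Real.logb 2 ((k v : ℝ) / (N : ℝ)) with hL
  have hNr : (0:ℝ) < (N : ℝ) := by positivity
  have hsh : shEnt (fun v => (k v : ℝ) / (N : ℝ)) = -(L / (N : ℝ)) := by
    rw [shEnt, hL, neg_inj, Finset.sum_div]
    exact Finset.sum_congr rfl fun v _ => by field_simp
  rw [hsh] at h
  have h2 : -(L / (N:ℝ)) * (N:ℝ) < (A - ε) * (N:ℝ) := mul_lt_mul_of_pos_right h hNr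
  have h3 : -(L / (N:ℝ)) * (N:ℝ) = -L := by field_simp
  rw [h3] at h2
  nlinarith

lemma aux_Scard (n : ℕ) (I : Finset (Fin n)) (y : {i // i ∈ I} → Bool) :
    (Finset.univ.filter (fun x : Fin n → Bool =>
        ∀ i : {i // i ∈ I}, x i.1 = y i)).card = 2 ^ (n - I.card) := by
  rw [← Fintype.card_subtype]
  have e : {x : Fin n → Bool // ∀ i : {i // i ∈ I}, x i.1 = y i}
      ≃ ({i : Fin n // i ∉ I} → Bool) :=
    { toFun := fun x j => x.1 j.1
      invFun := fun g => ⟨fun i => if h : i ∈ I then y ⟨i, h⟩ else g ⟨i, h⟩,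
        fun i => by simp⟩
      left_inv := by
        intro x
        apply Subtype.ext
        funext i
        by_cases h : i ∈ I
        · simp [h, (x.2 ⟨i, h⟩).symm]
        · simp [h]
      right_inv := by
        intro g
        funext j
        simp [j.2] }
  rw [Fintype.card_congr e, Fintype.card_fun, Fintype.card_bool]
  congr 1
  have : Fintype.card {i : Fin n // i ∉ I} = Fintype.card (Fin n) - Fintype.card {i : Fin n // i ∈ I} :=
    Fintype.card_subtype_compl _
  rw [this, Fintype.card_fin, Fintype.card_coe]


set_option maxHeartbeats 2000000 in
open scoped Classical in
/-- For a fixed `I` with `|I| = nβ` and fixed `y`, a uniformly random function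
`f : {0,1}^n → {0,1}^(nα)` satisfies `H(f(X) | X|_I = y) ≥ nα − 2^(−nδ)` with
probability at least `1 − 2^(−2^(nα)(2^(n(1−β−α−δ)) − n(1−β+1/n)))`. -/
theorem stmt_13 (n a : ℕ) (hn : 1 ≤ n) (α β δ : ℝ)
    (hα : 0 < α) (hβ : 0 < β) (hδ : 0 < δ) (hsum : α + β + δ < 1)
    (ha : (a : ℝ) = (n : ℝ) * α)
    (I : Finset (Fin n)) (hI : (I.card : ℝ) = (n : ℝ) * β)
    (y : {i // i ∈ I} → Bool) :
    1 - (2 : ℝ) ^ (-((2 : ℝ) ^ ((n : ℝ) * α) *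
        ((2 : ℝ) ^ ((n : ℝ) * (1 - β - α - δ)) - (n : ℝ) * (1 - β + 1 / (n : ℝ)))))
    ≤ ((Finset.univ.filter (fun f : (Fin n → Bool) → (Fin a → Bool) =>
          (n : ℝ) * α - (2 : ℝ) ^ (-((n : ℝ) * δ)) ≤ condImgEnt f I y)).card : ℝ) /
      (Fintype.card ((Fin n → Bool) → (Fin a → Bool)) : ℝ) := by
  classical
  have hn0 : (0:ℝ) < (n:ℝ) := by exact_mod_cast hn
  set S : Finset (Fin n → Bool) :=
    Finset.univ.filter (fun x : Fin n → Bool => ∀ i : {i // i ∈ I}, x i.1 = y i) with hSdef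
  set N : ℕ := S.card with hNdef
  have hScard : N = 2 ^ (n - I.card) := aux_Scard n I y
  have hN : 0 < N := by rw [hScard]; positivity
  set ε : ℝ := (2:ℝ) ^ (-((n:ℝ) * δ)) with hε
  set M : ℕ := Fintype.card (Fin a → Bool) with hM
  have hMcard : M = 2 ^ a := by simp [hM, Fintype.card_fun]
  have hMpos : (0:ℝ) < (M:ℝ) := by rw [hMcard]; positivity
  have hD : Fintype.card (Fin n → Bool) = 2 ^ n := by simp [Fintype.card_fun]
  have hT : Fintype.card ((Fin n → Bool) → (Fin a → Bool)) = M ^ (2 ^ n) := by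
    rw [Fintype.card_fun, hD, hM]
  -- entropy rewriting
  have hEnt : ∀ f : (Fin n → Bool) → (Fin a → Bool),
      condImgEnt f I y
        = shEnt (fun v => ((S.filter (fun x => f x = v)).card : ℝ) / (N : ℝ)) := by
    intro f
    unfold condImgEnt
    congr 1
    funext v
    rw [hSdef, Finset.filter_filter]
  -- the type map
  have hkle : ∀ (f : (Fin n → Bool) → (Fin a → Bool)) (v : Fin a → Bool),
      (S.filter (fun x => f x = v)).card < N + 1 :=
    fun f v => Nat.lt_succ_of_le (Finset.card_le_card (Finset.filter_subset _ _))
  set t : ((Fin n → Bool) → (Fin a → Bool)) → ((Fin a → Bool) → Fin (N + 1)) :=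
    fun f v => ⟨(S.filter (fun x => f x = v)).card, hkle f v⟩ with ht
  set B : Finset ((Fin n → Bool) → (Fin a → Bool)) :=
    Finset.univ.filter (fun f : (Fin n → Bool) → (Fin a → Bool) =>
      ¬ ((n : ℝ) * α - ε ≤ condImgEnt f I y)) with hB
  -- per fiber bound
  have fiber_bound : ∀ τ : (Fin a → Bool) → Fin (N + 1),
      ((B.filter (fun f => t f = τ)).card : ℝ)
        ≤ (2:ℝ) ^ (-((N:ℝ) * ε)) * (M:ℝ) ^ (2 ^ n) := by
    intro τ
    rcases Finset.eq_empty_or_nonempty (B.filter (fun f => t f = τ)) with he | ⟨f0, hf0⟩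
    · rw [he]; simp; positivity
    · set k : (Fin a → Bool) → ℕ := fun v => (S.filter (fun x => f0 x = v)).card with hk
      have hf0B : f0 ∈ B := (Finset.mem_filter.1 hf0).1
      have hτ : t f0 = τ := (Finset.mem_filter.1 hf0).2
      have hsum' : ∑ v, k v = N :=
        (Finset.card_eq_sum_card_fiberwise (fun x _ => Finset.mem_univ (f0 x))).symm
      have hbad : shEnt (fun v => (k v : ℝ)/(N:ℝ)) < (n:ℝ)*α - ε := by
        have h1 := (Finset.mem_filter.1 hf0B).2
        rw [hEnt f0] at h1
        exact lt_of_not_ge h1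
      have hkey := aux_badIneq k N hN ((n:ℝ)*α) ε hbad
      have hsub : B.filter (fun f => t f = τ) ⊆
          Finset.univ.filter (fun g : (Fin n → Bool) → (Fin a → Bool) => ∀ v, (S.filter (fun x => g x = v)).card = k v) := by
        intro f hf
        rcases Finset.mem_filter.1 hf with ⟨_, hft⟩
        refine Finset.mem_filter.2 ⟨Finset.mem_univ _, fun v => ?_⟩
        have h2 : t f v = t f0 v := by rw [hft, hτ]
        exact congrArg Fin.val h2
      have hcard := Finset.card_le_card hsub
      have hfb := aux_fiberBound S k (by rw [hsum', hNdef])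
      rw [hD, ← hNdef, ← hM] at hfb
      have hfb' := hfb
      -- combine
      set C : ℝ := ∏ v, ((k v : ℝ)/(N:ℝ)) ^ (k v) with hC
      have hC0 : 0 ≤ C := Finset.prod_nonneg fun v _ => by positivity
      set u : ℝ := (2:ℝ) ^ ((N:ℝ) * ((n:ℝ)*α)) with hu
      have hu0 : (0:ℝ) < u := Real.rpow_pos_of_pos two_pos _
      have huinv : (2:ℝ) ^ (-((N:ℝ) * ((n:ℝ)*α))) = u⁻¹ := by
        rw [hu, ← Real.rpow_neg (le_of_lt two_pos)]
      have hupow : u = (M:ℝ) ^ N := by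
        rw [hu, ← ha, hMcard]
        push_cast
        rw [show ((N:ℝ)*(a:ℝ)) = (((a*N : ℕ)):ℝ) by push_cast; ring, Real.rpow_natCast,
          pow_mul]
      have e1 : ((B.filter (fun f => t f = τ)).card : ℝ) * u⁻¹
          ≤ (2:ℝ) ^ (-((N:ℝ) * ε)) * (M:ℝ) ^ (2 ^ n - N) := by
        calc ((B.filter (fun f => t f = τ)).card : ℝ) * u⁻¹
            ≤ ((Finset.univ.filter (fun g : (Fin n → Bool) → (Fin a → Bool) => ∀ v,
                (S.filter (fun x => g x = v)).card = k v)).card : ℝ)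
              * ((2:ℝ) ^ (-((N:ℝ) * ε)) * C) := by
              apply mul_le_mul (by exact_mod_cast hcard) (by rw [← huinv]; exact hkey)
                (le_of_lt (inv_pos.2 hu0)) (Nat.cast_nonneg _)
          _ = (2:ℝ) ^ (-((N:ℝ) * ε)) * (((Finset.univ.filter (fun g : (Fin n → Bool) → (Fin a → Bool) => ∀ v,
                (S.filter (fun x => g x = v)).card = k v)).card : ℝ) * C) := by ring
          _ ≤ (2:ℝ) ^ (-((N:ℝ) * ε)) * (M:ℝ) ^ (2 ^ n - N) := by
              apply mul_le_mul_of_nonneg_left hfb (Real.rpow_nonneg (le_of_lt two_pos) _)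
      have e2 := mul_le_mul_of_nonneg_right e1 (le_of_lt hu0)
      have e3 : ((B.filter (fun f => t f = τ)).card : ℝ) * u⁻¹ * u
          = ((B.filter (fun f => t f = τ)).card : ℝ) := by
        rw [mul_assoc, inv_mul_cancel₀ (ne_of_gt hu0), mul_one]
      rw [e3] at e2
      calc ((B.filter (fun f => t f = τ)).card : ℝ)
          ≤ (2:ℝ) ^ (-((N:ℝ) * ε)) * (M:ℝ) ^ (2 ^ n - N) * u := e2
        _ = (2:ℝ) ^ (-((N:ℝ) * ε)) * (M:ℝ) ^ (2 ^ n) := by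
            have hle : N ≤ 2 ^ n := by
              rw [hNdef, ← hD, ← Finset.card_univ]
              exact Finset.card_le_card (Finset.subset_univ _)
            rw [hupow, mul_assoc, ← pow_add, Nat.sub_add_cancel hle]
  -- sum over fibers
  have hBsum : B.card = ∑ τ : (Fin a → Bool) → Fin (N+1),
      (B.filter (fun f => t f = τ)).card :=
    Finset.card_eq_sum_card_fiberwise (fun f _ => Finset.mem_univ (t f))
  have hBbound : (B.card : ℝ)
      ≤ ((N:ℝ)+1)^M * ((2:ℝ) ^ (-((N:ℝ) * ε)) * (M:ℝ) ^ (2 ^ n)) := by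
    rw [hBsum]
    push_cast
    calc (∑ τ : (Fin a → Bool) → Fin (N+1), ((B.filter (fun f => t f = τ)).card : ℝ))
        ≤ ∑ _τ : (Fin a → Bool) → Fin (N+1),
            (2:ℝ) ^ (-((N:ℝ) * ε)) * (M:ℝ) ^ (2 ^ n) :=
          Finset.sum_le_sum fun τ _ => fiber_bound τ
      _ = ((N:ℝ)+1)^M * ((2:ℝ) ^ (-((N:ℝ) * ε)) * (M:ℝ) ^ (2 ^ n)) := by
          rw [Finset.sum_const, nsmul_eq_mul, Finset.card_univ, Fintype.card_fun,
            Fintype.card_fin, ← hM]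
          push_cast
          ring
  -- numeric identifications
  have hIle : I.card ≤ n := by simpa using Finset.card_le_univ I
  set r : ℝ := ((n - I.card : ℕ) : ℝ) with hr
  have hrval : r = (n:ℝ) * (1 - β) := by
    rw [hr, Nat.cast_sub hIle, hI]; ring
  have hNr : (N:ℝ) = (2:ℝ) ^ r := by
    rw [hScard, hr, Real.rpow_natCast]
    push_cast
    ring
  have hMr : (M:ℝ) = (2:ℝ) ^ ((n:ℝ)*α) := by
    rw [hMcard, ← ha]
    push_cast
    rw [Real.rpow_natCast]
  set E : ℝ := (2:ℝ)^((n:ℝ)*α) * ((2:ℝ)^((n:ℝ)*(1-β-α-δ)) - (n:ℝ)*(1-β+1/(n:ℝ))) with hE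
  have hEeq : E = (N:ℝ) * ε - (M:ℝ)*(r+1) := by
    rw [hE, mul_sub]
    congr 1
    · rw [hNr, hε, ← Real.rpow_add two_pos, ← Real.rpow_add two_pos]
      congr 1
      rw [hrval]; ring
    · rw [hMr]
      congr 1
      rw [hrval]
      field_simp
  have h2r : ((N:ℝ)+1)^M ≤ (2:ℝ)^((M:ℝ)*(r+1)) := by
    have h1 : (N:ℝ)+1 ≤ 2*(N:ℝ) := by
      have h1' : (1:ℝ) ≤ (N:ℝ) := by exact_mod_cast hN
      linarith
    have h2 : (2:ℝ)^((M:ℝ)*(r+1)) = (2*(N:ℝ))^M := by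
      rw [mul_comm (M:ℝ), Real.rpow_mul (le_of_lt two_pos), Real.rpow_natCast]
      congr 1
      rw [Real.rpow_add two_pos, Real.rpow_one, hNr]
      ring
    calc ((N:ℝ)+1)^M ≤ (2*(N:ℝ))^M := pow_le_pow_left₀ (by positivity) h1 M
      _ = _ := h2.symm
  have hTpos : (0:ℝ) < (Fintype.card ((Fin n → Bool) → (Fin a → Bool)) : ℝ) := by
    rw [hT]; push_cast; positivity
  have hTr : (Fintype.card ((Fin n → Bool) → (Fin a → Bool)) : ℝ) = (M:ℝ)^(2^n) := by
    rw [hT]; push_cast; ring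
  have hGB : (Finset.univ.filter (fun f : (Fin n → Bool) → (Fin a → Bool) =>
        (n:ℝ)*α - ε ≤ condImgEnt f I y)).card + B.card
      = Fintype.card ((Fin n → Bool) → (Fin a → Bool)) := by
    rw [hB, Finset.card_filter_add_card_filter_not, Finset.card_univ]
  have hGcast : (((Finset.univ.filter (fun f : (Fin n → Bool) → (Fin a → Bool) =>
        (n:ℝ)*α - ε ≤ condImgEnt f I y)).card : ℝ))
      = (Fintype.card ((Fin n → Bool) → (Fin a → Bool)) : ℝ) - (B.card : ℝ) := by
    rw [← hGB]; push_cast; ring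
  rw [hGcast, sub_div, div_self (ne_of_gt hTpos)]
  apply sub_le_sub_left
  rw [div_le_iff₀ hTpos]
  have hneg : -E = (M:ℝ)*(r+1) + (-((N:ℝ)*ε)) := by rw [hEeq]; ring
  rw [hneg, Real.rpow_add two_pos]
  calc (B.card : ℝ) ≤ ((N:ℝ)+1)^M * ((2:ℝ) ^ (-((N:ℝ) * ε)) * (M:ℝ) ^ (2 ^ n)) := hBbound
    _ ≤ (2:ℝ)^((M:ℝ)*(r+1)) * ((2:ℝ) ^ (-((N:ℝ) * ε)) * (M:ℝ) ^ (2 ^ n)) := by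
        apply mul_le_mul_of_nonneg_right h2r
        positivity
    _ = (2:ℝ)^((M:ℝ)*(r+1)) * (2:ℝ) ^ (-((N:ℝ) * ε)) *
          (Fintype.card ((Fin n → Bool) → (Fin a → Bool)) : ℝ) := by
        rw [hTr]; ring
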